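/- Let r be a positive integer and H a complex Hilbert space. Let (e_k) and (u_k) be sequences of minimal tripotents in L(ℂ^r, H) (i.e., rank-one operators a_k⊗b_k and c_k⊗d_k with unit vectors) converging in the weak operator topology to e and u respectively. If e_k u_k* = 0 (as an operator from H to H) for all sufficiently large k, then e u* = 0. -/

import Mathlib

open ContinuousLinearMap Filter

/-- The rank-one operator `a ⊗ b : ℂ^r → H`, `μ ↦ ⟨μ, a⟩ b` (inner product linear in the
first variable, i.e. `⟪a, μ⟫` in Mathlib's convention). -/
noncomputable def rankOne {r : ℕ} {H : Type*} [NormedAddCommGroup H] [InnerProductSpace ℂ H]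
    (a : EuclideanSpace ℂ (Fin r)) (b : H) : EuclideanSpace ℂ (Fin r) →L[ℂ] H :=
  (innerSL ℂ a).smulRight b

lemma adj_tendsto {r : ℕ} {H : Type*} [NormedAddCommGroup H] [InnerProductSpace ℂ H]
    [CompleteSpace H]
    (A : ℕ → EuclideanSpace ℂ (Fin r) →L[ℂ] H) (A' : EuclideanSpace ℂ (Fin r) →L[ℂ] H)
    (hA : ∀ (μ : EuclideanSpace ℂ (Fin r)) (h : H),
      Tendsto (fun k => (inner ℂ (A k μ) h : ℂ)) atTop (nhds (inner ℂ (A' μ) h)))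
    (g : H) :
    Tendsto (fun k => adjoint (A k) g) atTop (nhds (adjoint A' g)) := by
  rw [(PiLp.continuousLinearEquiv 2 ℂ
      (fun _ : Fin r => ℂ)).toHomeomorph.isInducing.tendsto_nhds_iff, tendsto_pi_nhds]
  intro i
  have key : ∀ (B : EuclideanSpace ℂ (Fin r) →L[ℂ] H),
      (adjoint B g) i = inner ℂ (B (EuclideanSpace.single i (1:ℂ))) g := by
    intro B
    have h1 : (inner ℂ (EuclideanSpace.single i (1:ℂ)) (adjoint B g) : ℂ)
        = inner ℂ (B (EuclideanSpace.single i (1:ℂ))) g :=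
      ContinuousLinearMap.adjoint_inner_right B _ _
    rw [← h1, EuclideanSpace.inner_single_left]
    simp
  simp only [Function.comp_def, ContinuousLinearEquiv.coe_toHomeomorph,
    PiLp.coe_continuousLinearEquiv, key]
  exact hA _ g

/-- Lemma 5.4: if `(e_k)` and `(u_k)` are sequences of minimal tripotents in `L(ℂ^r, H)`
converging in the weak operator topology to `e` and `u` respectively, and `e_k u_k* = 0`
for all sufficiently large `k`, then `e u* = 0`. -/
theorem stmt4 {r : ℕ} (hr : 0 < r) {H : Type*} [NormedAddCommGroup H] [InnerProductSpace ℂ H]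
    [CompleteSpace H]
    (e u : ℕ → EuclideanSpace ℂ (Fin r) →L[ℂ] H)
    (e' u' : EuclideanSpace ℂ (Fin r) →L[ℂ] H)
    (hemin : ∀ k, ∃ (a : EuclideanSpace ℂ (Fin r)) (b : H),
      ‖a‖ = 1 ∧ ‖b‖ = 1 ∧ e k = rankOne a b)
    (humin : ∀ k, ∃ (c : EuclideanSpace ℂ (Fin r)) (d : H),
      ‖c‖ = 1 ∧ ‖d‖ = 1 ∧ u k = rankOne c d)
    (he : ∀ (μ : EuclideanSpace ℂ (Fin r)) (h : H),
      Tendsto (fun k => (inner ℂ (e k μ) h : ℂ)) atTop (nhds (inner ℂ (e' μ) h)))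
    (hu : ∀ (μ : EuclideanSpace ℂ (Fin r)) (h : H),
      Tendsto (fun k => (inner ℂ (u k μ) h : ℂ)) atTop (nhds (inner ℂ (u' μ) h)))
    (hzero : ∀ᶠ k in atTop, e k ∘L adjoint (u k) = 0) :
    e' ∘L adjoint u' = 0 := by
  have key : ∀ (h h' : H), (inner ℂ ((e' ∘L adjoint u') h) h' : ℂ) = 0 := by
    intro h h'
    have h1 : Tendsto (fun k => (inner ℂ (adjoint (u k) h) (adjoint (e k) h') : ℂ))
        atTop (nhds (inner ℂ (adjoint u' h) (adjoint e' h'))) :=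
      (adj_tendsto u u' hu h).inner (adj_tendsto e e' he h')
    have h2 : ∀ᶠ k in atTop,
        (inner ℂ (adjoint (u k) h) (adjoint (e k) h') : ℂ) = 0 := by
      filter_upwards [hzero] with k hk
      rw [ContinuousLinearMap.adjoint_inner_right (e k)]
      have : e k (adjoint (u k) h) = (e k ∘L adjoint (u k)) h := rfl
      rw [this, hk]
      simp
    have h3 : Tendsto (fun _ : ℕ => (0:ℂ)) atTop
        (nhds (inner ℂ (adjoint u' h) (adjoint e' h'))) := h1.congr' h2
    have h4 : (inner ℂ (adjoint u' h) (adjoint e' h') : ℂ) = 0 :=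
      tendsto_nhds_unique h3 tendsto_const_nhds
    rw [ContinuousLinearMap.adjoint_inner_right] at h4
    exact h4
  ext h
  have := key h ((e' ∘L adjoint u') h)
  rw [inner_self_eq_zero] at this
  simpa using this
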